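/- Suppose Ω ⊆ ℙ(ℂ^{d+1}) is a proper linearly convex open set. Then the group Aut(Ω) of projective transformations preserving Ω acts properly on Ω: for every compact set K ⊆ Ω, the set {φ ∈ Aut(Ω) : φ(K) ∩ K ≠ ∅} is compact. -/

import Mathlib

open scoped LinearAlgebra.Projectivization MatrixGroups
open Projectivization

noncomputable section
namespace ComplexConvex

/-! ### Complex projective space and `PSL(d+1, ℂ)` -/

/-- The underlying vector space `ℂ^{d+1}`. -/
abbrev Vd (d : ℕ) : Type := Fin (d + 1) → ℂ

/-- Complex projective space `ℙ(ℂ^{d+1})`. -/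
abbrev CP (d : ℕ) : Type := ℙ ℂ (Vd d)

instance (d : ℕ) : TopologicalSpace (CP d) := instTopologicalSpaceQuotient

abbrev SLd (d : ℕ) : Type := Matrix.SpecialLinearGroup (Fin (d + 1)) ℂ

instance (d : ℕ) : TopologicalSpace (SLd d) :=
  TopologicalSpace.induced (fun g => (g : Matrix (Fin (d + 1)) (Fin (d + 1)) ℂ)) inferInstance

/-- `PSL(d+1, ℂ)`, the quotient of `SL(d+1, ℂ)` by its center. -/
abbrev PSLd (d : ℕ) : Type := Matrix.ProjectiveSpecialLinearGroup (Fin (d + 1)) ℂ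

/-- The projective transformation of `ℙ(ℂ^{d+1})` induced by an element of `SL(d+1,ℂ)`. -/
def slEquiv {d : ℕ} (g : SLd d) : Equiv.Perm (CP d) where
  toFun := Projectivization.map (Matrix.SpecialLinearGroup.toLin' g).toLinearMap
      (Matrix.SpecialLinearGroup.toLin' g).injective
  invFun := Projectivization.map (Matrix.SpecialLinearGroup.toLin' g).symm.toLinearMap
      (Matrix.SpecialLinearGroup.toLin' g).symm.injective
  left_inv := by
    intro x
    induction x using Projectivization.ind with
    | h v hv => rw [Projectivization.map_mk, Projectivization.map_mk]; simp
  right_inv := by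
    intro x
    induction x using Projectivization.ind with
    | h v hv => rw [Projectivization.map_mk, Projectivization.map_mk]; simp

/-- The action of `SL(d+1,ℂ)` on `ℙ(ℂ^{d+1})`, as a homomorphism into permutations. -/
def slPerm (d : ℕ) : SLd d →* Equiv.Perm (CP d) where
  toFun := slEquiv
  map_one' := by
    ext x
    induction x using Projectivization.ind with
    | h v hv =>
      simp only [slEquiv, Equiv.coe_fn_mk, Equiv.Perm.coe_one, id_eq]
      rw [Projectivization.map_mk]
      simp
  map_mul' g h := by
    ext x
    induction x using Projectivization.ind with
    | h v hv =>
      simp only [slEquiv, Equiv.coe_fn_mk, Equiv.Perm.mul_apply]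
      rw [Projectivization.map_mk, Projectivization.map_mk, Projectivization.map_mk]
      simp

/-- The action of `PSL(d+1,ℂ)` on `ℙ(ℂ^{d+1})`. -/
def pslPerm (d : ℕ) : PSLd d →* Equiv.Perm (CP d) :=
  QuotientGroup.lift _ (slPerm d) (by
    intro g hg
    obtain ⟨r, hr, hscalar⟩ := Matrix.SpecialLinearGroup.mem_center_iff.mp hg
    have hr0 : r ≠ 0 := by
      intro h
      rw [h] at hr
      simp at hr
    ext x
    induction x using Projectivization.ind with
    | h v hv =>
      simp only [slPerm, slEquiv, MonoidHom.coe_mk, OneHom.coe_mk, Equiv.coe_fn_mk,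
        Equiv.Perm.coe_one, id_eq]
      rw [Projectivization.map_mk]
      have hval : (Matrix.SpecialLinearGroup.toLin' g).toLinearMap v = r • v := by
        show Matrix.SpecialLinearGroup.toLin' g v = r • v
        rw [Matrix.SpecialLinearGroup.toLin'_apply, Matrix.toLin'_apply, ← hscalar,
          Matrix.scalar_apply]
        funext i
        simp [Matrix.mulVec_diagonal, Pi.smul_apply, smul_eq_mul]
      rw [Projectivization.mk_eq_mk_iff]
      exact ⟨Units.mk0 r hr0, by simp [hval]⟩)

/-! ### Projective subspaces and convexity notions -/

/-- The projective subspace associated with a linear subspace. -/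
def projSet {d : ℕ} (W : Submodule ℂ (Vd d)) : Set (CP d) :=
  {x : CP d | x.submodule ≤ W}

/-- A complex projective line: the projectivization of a 2-dimensional subspace. -/
def IsProjLine {d : ℕ} (L : Set (CP d)) : Prop :=
  ∃ W : Submodule ℂ (Vd d), Module.finrank ℂ W = 2 ∧ L = projSet W

/-- A complex projective hyperplane: the projectivization of a `d`-dimensional subspace. -/
def IsProjHyperplane {d : ℕ} (H : Set (CP d)) : Prop :=
  ∃ W : Submodule ℂ (Vd d), Module.finrank ℂ W = d ∧ H = projSet W

/-- `Ω` is `ℂ`-convex: its intersection with every complex projective line, and the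
complement of this intersection in the line, are connected. -/
def CConvex {d : ℕ} (Ω : Set (CP d)) : Prop :=
  ∀ L : Set (CP d), IsProjLine L → IsPreconnected (L ∩ Ω) ∧ IsPreconnected (L \ Ω)

/-- `Ω` is proper: its closure contains no complex projective line. -/
def IsProperDomain {d : ℕ} (Ω : Set (CP d)) : Prop :=
  ∀ L : Set (CP d), IsProjLine L → ¬ L ⊆ closure Ω

/-- `Ω` is linearly convex: every point of the complement lies on a complex hyperplane
missing `Ω`. -/
def LinearlyConvex {d : ℕ} (Ω : Set (CP d)) : Prop :=
  ∀ p ∈ (Set.univ : Set (CP d)) \ Ω, ∃ H : Set (CP d),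
    IsProjHyperplane H ∧ p ∈ H ∧ H ∩ Ω = ∅

/-- `Ω` is weakly linearly convex: every boundary point lies on a complex hyperplane
missing `Ω`. -/
def WeaklyLinearlyConvex {d : ℕ} (Ω : Set (CP d)) : Prop :=
  ∀ p ∈ frontier Ω, ∃ H : Set (CP d), IsProjHyperplane H ∧ p ∈ H ∧ H ∩ Ω = ∅

/-- `H` is a complex tangent hyperplane of `Ω` at the boundary point `p`. -/
def IsTangentHyperplaneAt {d : ℕ} (Ω H : Set (CP d)) (p : CP d) : Prop :=
  IsProjHyperplane H ∧ p ∈ frontier Ω ∧ p ∈ H ∧ H ∩ Ω = ∅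

/-- `Ω` is strictly `ℂ`-convex: every complex tangent hyperplane of `Ω` meets the boundary
at exactly one point. -/
def StrictlyCConvex {d : ℕ} (Ω : Set (CP d)) : Prop :=
  ∀ (H : Set (CP d)) (p : CP d), IsTangentHyperplaneAt Ω H p → H ∩ frontier Ω = {p}

/-! ### `C^k` boundaries and projective balls -/

/-- A point lies in the affine chart associated to the linear automorphism `A`. -/
def InChart {d : ℕ} (A : Vd d ≃ₗ[ℂ] Vd d) (x : CP d) : Prop :=
  A x.rep 0 ≠ 0

/-- The affine coordinates of a point in the affine chart associated to `A`. -/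
def chartMap {d : ℕ} (A : Vd d ≃ₗ[ℂ] Vd d) (x : CP d) : Fin d → ℂ :=
  fun i => A x.rep i.succ / A x.rep 0

/-- `Ω` has `C^k` boundary: near every boundary point, in some affine chart, the boundary
is the regular zero set of a real-valued `C^k` function. -/
def HasCkBoundary {d : ℕ} (k : WithTop ℕ∞) (Ω : Set (CP d)) : Prop :=
  ∀ x ∈ frontier Ω, ∃ A : Vd d ≃ₗ[ℂ] Vd d, InChart A x ∧
    ∃ (U : Set (Fin d → ℂ)) (F : (Fin d → ℂ) → ℝ),
      IsOpen U ∧ chartMap A x ∈ U ∧ ContDiffOn ℝ k F U ∧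
      (∀ u ∈ U, fderivWithin ℝ F U u ≠ 0) ∧
      (∀ y : CP d, InChart A y → chartMap A y ∈ U → (y ∈ frontier Ω ↔ F (chartMap A y) = 0))

/-- `Ω` is a projective ball: in suitable homogeneous coordinates it is
`{[1 : z₁ : ⋯ : z_d] : ∑ |zᵢ|² < 1}`. -/
def IsProjBall {d : ℕ} (Ω : Set (CP d)) : Prop :=
  ∃ b : Module.Basis (Fin (d + 1)) ℂ (Vd d),
    Ω = {x : CP d | b.repr x.rep 0 ≠ 0 ∧
      ∑ i : Fin d, ‖b.repr x.rep i.succ / b.repr x.rep 0‖ ^ 2 < 1}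

/-! ### Automorphisms, dividing groups -/

/-- The group of projective automorphisms of `Ω`, as a subgroup of `PSL(d+1,ℂ)`. -/
def Aut {d : ℕ} (Ω : Set (CP d)) : Subgroup (PSLd d) where
  carrier := {φ : PSLd d | pslPerm d φ '' Ω = Ω}
  one_mem' := by simp
  mul_mem' := by
    intro a b ha hb
    simp only [Set.mem_setOf_eq] at ha hb ⊢
    have h : ⇑(pslPerm d (a * b)) = ⇑(pslPerm d a) ∘ ⇑(pslPerm d b) := by
      rw [map_mul]; rfl
    rw [h, Set.image_comp, hb, ha]
  inv_mem' := by
    intro a ha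
    simp only [Set.mem_setOf_eq] at ha ⊢
    have h : ⇑(pslPerm d a⁻¹) ∘ ⇑(pslPerm d a) = id := by
      funext x
      rw [map_inv]
      exact (pslPerm d a).symm_apply_apply x
    calc pslPerm d a⁻¹ '' Ω = pslPerm d a⁻¹ '' (pslPerm d a '' Ω) := by rw [ha]
      _ = (⇑(pslPerm d a⁻¹) ∘ ⇑(pslPerm d a)) '' Ω := by rw [Set.image_comp]
      _ = Ω := by rw [h, Set.image_id]

/-- `φ` belongs to the identity component `Aut₀(Ω)` of `Aut(Ω)`. -/
def InAut0 {d : ℕ} (Ω : Set (CP d)) (φ : PSLd d) : Prop :=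
  ∃ h : φ ∈ Aut Ω, (⟨φ, h⟩ : Aut Ω) ∈ connectedComponent (1 : Aut Ω)

/-- A subgroup `Γ ≤ PSL(d+1,ℂ)` divides `Ω`: it preserves `Ω` and `Γ ⬝ K = Ω` for some
compact `K ⊆ Ω`. -/
def Divides {d : ℕ} (Γ : Subgroup (PSLd d)) (Ω : Set (CP d)) : Prop :=
  (∀ γ ∈ Γ, pslPerm d γ '' Ω = Ω) ∧
    ∃ K : Set (CP d), K ⊆ Ω ∧ IsCompact K ∧ (⋃ γ ∈ Γ, pslPerm d γ '' K) = Ω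

/-- `Ω` is divisible: some discrete subgroup of `PSL(d+1,ℂ)` divides it. -/
def Divisible {d : ℕ} (Ω : Set (CP d)) : Prop :=
  ∃ Γ : Subgroup (PSLd d), DiscreteTopology Γ ∧ Divides Γ Ω

/-- A subgroup is torsion free. -/
def TorsionFree {d : ℕ} (Γ : Subgroup (PSLd d)) : Prop :=
  ∀ γ ∈ Γ, γ ≠ 1 → ∀ n : ℕ, 0 < n → γ ^ n ≠ 1

/-! ### The Hilbert metric -/

/-- The projectivization of the dual space. -/
abbrev DualP (d : ℕ) : Type := ℙ ℂ (Module.Dual ℂ (Vd d))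

/-- The complex dual `Ω*` of `Ω`. -/
def dualSet {d : ℕ} (Ω : Set (CP d)) : Set (DualP d) :=
  {f : DualP d | ∀ x ∈ Ω, f.rep (Projectivization.rep x) ≠ 0}

/-- The Hilbert (Dubois) metric of a proper linearly convex set. -/
def hilbertDist {d : ℕ} (Ω : Set (CP d)) (v w : CP d) : ℝ :=
  sSup {r : ℝ | ∃ f ∈ dualSet Ω, ∃ g ∈ dualSet Ω,
    r = Real.log ((‖f.rep v.rep‖ * ‖g.rep w.rep‖) /
        (‖f.rep w.rep‖ * ‖g.rep v.rep‖))}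

/-! ### Eigenvalues, proximality -/

/-- The ordered list of moduli of the eigenvalues (with multiplicity) of a matrix. -/
def eigMods {d : ℕ} (g : Matrix (Fin (d + 1)) (Fin (d + 1)) ℂ) : List ℝ :=
  ((g.charpoly.roots).map (fun z : ℂ => ‖z‖)).sort (· ≤ ·)

/-- `σ_i(g)` for `i = 1, …, d+1`: the `i`-th smallest modulus of an eigenvalue of `g`. -/
def sigma' {d : ℕ} (g : Matrix (Fin (d + 1)) (Fin (d + 1)) ℂ) (i : ℕ) : ℝ :=
  (eigMods g).getD (i - 1) 0

/-- An element of `PSL(d+1,ℂ)` is proximal if `σ_d < σ_{d+1}` (for any lift, the property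
being independent of the lift). -/
def IsProximal {d : ℕ} (φ : PSLd d) : Prop :=
  ∀ g : SLd d, (QuotientGroup.mk g : PSLd d) = φ →
    sigma' (g : Matrix (Fin (d + 1)) (Fin (d + 1)) ℂ) d <
      sigma' (g : Matrix (Fin (d + 1)) (Fin (d + 1)) ℂ) (d + 1)

/-- Bi-proximal elements: `φ` and `φ⁻¹` are proximal. -/
def IsBiProximal {d : ℕ} (φ : PSLd d) : Prop :=
  IsProximal φ ∧ IsProximal φ⁻¹

/-- Almost unipotent elements: all eigenvalue moduli equal `1`. -/
def IsAlmostUnipotent {d : ℕ} (φ : PSLd d) : Prop :=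
  ∀ g : SLd d, (QuotientGroup.mk g : PSLd d) = φ →
    ∀ r ∈ eigMods (g : Matrix (Fin (d + 1)) (Fin (d + 1)) ℂ), r = 1

/-- `x` is the attracting fixed point `x⁺_φ`: an eigenline for an eigenvalue of modulus
`σ_{d+1}`. -/
def IsAttractingPoint {d : ℕ} (φ : PSLd d) (x : CP d) : Prop :=
  ∀ g : SLd d, (QuotientGroup.mk g : PSLd d) = φ →
    ∃ μ : ℂ, ‖μ‖ = sigma' (g : Matrix (Fin (d + 1)) (Fin (d + 1)) ℂ) (d + 1) ∧
      (g : Matrix (Fin (d + 1)) (Fin (d + 1)) ℂ).mulVec x.rep = μ • x.rep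

/-- `x` is the repelling fixed point `x⁻_φ`: an eigenline for an eigenvalue of modulus
`σ_1`. -/
def IsRepellingPoint {d : ℕ} (φ : PSLd d) (x : CP d) : Prop :=
  ∀ g : SLd d, (QuotientGroup.mk g : PSLd d) = φ →
    ∃ μ : ℂ, ‖μ‖ = sigma' (g : Matrix (Fin (d + 1)) (Fin (d + 1)) ℂ) 1 ∧
      (g : Matrix (Fin (d + 1)) (Fin (d + 1)) ℂ).mulVec x.rep = μ • x.rep

/-- The operator norm of a matrix with respect to the standard Hermitian norm on
`ℂ^{d+1}`. -/
def opNorm {d : ℕ} (g : Matrix (Fin (d + 1)) (Fin (d + 1)) ℂ) : ℝ :=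
  ‖Matrix.toEuclideanCLM (𝕜 := ℂ) g‖

/-! ### Quasi-isometries, word metrics, the Apollonian metric -/

/-- `f` is an `(A,B)`-quasi-isometric embedding with respect to the distance functions
`dX` and `dY`. -/
def IsQIEmbedding {X Y : Type*} (dX : X → X → ℝ) (dY : Y → Y → ℝ)
    (A B : ℝ) (f : X → Y) : Prop :=
  ∀ x₁ x₂ : X, (1 / A) * dX x₁ x₂ - B ≤ dY (f x₁) (f x₂) ∧
    dY (f x₁) (f x₂) ≤ A * dX x₁ x₂ + B

/-- `f` is an `(A,B)`-quasi-isometry. -/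
def IsQuasiIsometry {X Y : Type*} (dX : X → X → ℝ) (dY : Y → Y → ℝ)
    (A B : ℝ) (f : X → Y) : Prop :=
  IsQIEmbedding dX dY A B f ∧ ∃ R > 0, ∀ y : Y, ∃ x : X, dY y (f x) ≤ R

/-- `(X, dX)` is a quasi-geodesic space: for some `(A,B)`, any two points lie on the image
of an `(A,B)`-quasi-geodesic segment (an `(A,B)`-quasi-isometric embedding of a finite
integer interval with its standard metric). -/
def IsQuasiGeodesicSpace {X : Type*} (dX : X → X → ℝ) : Prop :=
  ∃ A B : ℝ, 0 < A ∧ ∀ x y : X, ∃ (N : ℕ) (f : Fin N → X),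
    (∃ i : Fin N, f i = x) ∧ (∃ j : Fin N, f j = y) ∧
    IsQIEmbedding (fun m n : Fin N => |(m : ℝ) - (n : ℝ)|) dX A B f

/-- The word metric on a group with respect to a generating set `S`. -/
def wordDist {Γ : Type*} [Group Γ] (S : Set Γ) (γ₁ γ₂ : Γ) : ℝ :=
  sInf {r : ℝ | ∃ l : List Γ, (∀ s ∈ l, s ∈ S ∪ S⁻¹) ∧ l.prod = γ₂⁻¹ * γ₁ ∧
    r = l.length}

/-- The Apollonian metric of a bounded set `Ω ⊆ ℂ`, the supremum being taken over
`b₁, b₂ ∈ (ℂ ∪ {∞}) ∖ Ω` with the convention `|z−∞|/|w−∞| = 1` (the terms where `b₁`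
and/or `b₂` equal `∞` are listed separately). -/
def apollonianDist (Ω : Set ℂ) (z w : ℂ) : ℝ :=
  sSup ({(0 : ℝ)} ∪
    {r : ℝ | ∃ b ∈ Ωᶜ, r = Real.log (dist z b / dist w b)} ∪
    {r : ℝ | ∃ b ∈ Ωᶜ, r = Real.log (dist w b / dist z b)} ∪
    {r : ℝ | ∃ b₁ ∈ Ωᶜ, ∃ b₂ ∈ Ωᶜ,
      r = Real.log ((dist z b₁ * dist w b₂) / (dist w b₁ * dist z b₂))})

/-- A `C¹` embedding of the circle into `ℂ`, parameterized `2π`-periodically by `ℝ`. -/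
def IsC1CircleEmbedding (f : ℝ → ℂ) : Prop :=
  ContDiff ℝ 1 f ∧ Function.Periodic f (2 * Real.pi) ∧
    Set.InjOn f (Set.Ico 0 (2 * Real.pi)) ∧ ∀ θ : ℝ, deriv f θ ≠ 0

/-- `Ω` is the bounded open set bounded by the image of the circle embedding `f`. -/
def IsInteriorDomainOf (f : ℝ → ℂ) (Ω : Set ℂ) : Prop :=
  IsOpen Ω ∧ Bornology.IsBounded Ω ∧ IsConnected Ω ∧
    frontier Ω = Set.range f ∧ Ω ∩ Set.range f = ∅



/-! ### Auxiliary material for the proof of Statement 8 -/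

section Statement8Aux

open scoped Matrix

variable {d : ℕ}

/-- Short name for the matrix space. -/
abbrev Mtx (d : ℕ) : Type := Matrix (Fin (d + 1)) (Fin (d + 1)) ℂ

lemma mk_eq_mk_of_eq {v w : Vd d} (hv : v ≠ 0) (hw : w ≠ 0) (h : v = w) :
    Projectivization.mk ℂ v hv = Projectivization.mk ℂ w hw := by subst h; rfl

lemma mulVec_ne_zero (g : SLd d) {v : Vd d} (hv : v ≠ 0) : (g : Mtx d) *ᵥ v ≠ 0 := by
  intro h
  apply hv
  have h2 : (Matrix.SpecialLinearGroup.toLin' g) v = (Matrix.SpecialLinearGroup.toLin' g) 0 := by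
    rw [map_zero, Matrix.SpecialLinearGroup.toLin'_apply, Matrix.toLin'_apply]
    exact h
  exact (Matrix.SpecialLinearGroup.toLin' g).injective h2

lemma pslPerm_mk_mk (g : SLd d) (v : Vd d) (hv : v ≠ 0) :
    pslPerm d (QuotientGroup.mk g) (Projectivization.mk ℂ v hv) =
      Projectivization.mk ℂ ((g : Mtx d) *ᵥ v) (mulVec_ne_zero g hv) := by
  have h1 : pslPerm d (QuotientGroup.mk g) = slPerm d g := by
    simp [pslPerm]
  rw [h1]
  show slEquiv g (Projectivization.mk ℂ v hv) = _
  simp only [slEquiv, Equiv.coe_fn_mk]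
  rw [Projectivization.map_mk]
  apply mk_eq_mk_of_eq
  show (Matrix.SpecialLinearGroup.toLin' g) v = _
  rw [Matrix.SpecialLinearGroup.toLin'_apply, Matrix.toLin'_apply]

lemma act_mem {Ω : Set (CP d)} {φ : PSLd d} (hφ : φ ∈ Aut Ω) {x : CP d} (hx : x ∈ Ω) :
    pslPerm d φ x ∈ Ω := by
  have h : pslPerm d φ '' Ω = Ω := hφ
  rw [← h]
  exact ⟨x, hx, rfl⟩

lemma act_not_mem {Ω : Set (CP d)} {φ : PSLd d} (hφ : φ ∈ Aut Ω) {x : CP d} (hx : x ∉ Ω) :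
    pslPerm d φ x ∉ Ω := by
  intro hmem
  apply hx
  have h : pslPerm d φ '' Ω = Ω := hφ
  rw [← h] at hmem
  obtain ⟨x', hx', he⟩ := hmem
  rwa [← (pslPerm d φ).injective he]

/-- `Projectivization.mk` with a junk value at `0`. -/
noncomputable def mkOr (v : Vd d) (x₀ : CP d) : CP d :=
  if h : v ≠ 0 then Projectivization.mk ℂ v h else x₀

lemma mkOr_pos {v : Vd d} (x₀ : CP d) (h : v ≠ 0) : mkOr v x₀ = Projectivization.mk ℂ v h :=
  dif_pos h

lemma mkOr_smul (x₀ : CP d) {c : ℂ} (hc : c ≠ 0) (v : Vd d) : mkOr (c • v) x₀ = mkOr v x₀ := by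
  by_cases hv : v = 0
  · subst hv; simp
  · have hcv : c • v ≠ 0 := smul_ne_zero hc hv
    rw [mkOr_pos x₀ hcv, mkOr_pos x₀ hv]
    rw [Projectivization.mk_eq_mk_iff']
    exact ⟨c, rfl⟩

lemma continuousAt_mkOr {v : Vd d} (hv : v ≠ 0) (x₀ : CP d) :
    ContinuousAt (fun w => mkOr w x₀) v := by
  have hopen : IsOpen {w : Vd d | w ≠ 0} := isOpen_compl_singleton
  apply ContinuousOn.continuousAt _ (hopen.mem_nhds hv)
  rw [continuousOn_iff_continuous_restrict]
  have hres : Set.restrict {w : Vd d | w ≠ 0} (fun w => mkOr w x₀) =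
      fun w : {w : Vd d // w ≠ 0} => Projectivization.mk ℂ w.1 w.2 := by
    funext w
    exact mkOr_pos x₀ w.2
  change Continuous (Set.restrict {w : Vd d | w ≠ 0} (fun w => mkOr w x₀))
  rw [hres]
  show Continuous fun w : {w : Vd d // w ≠ 0} => Quotient.mk'' w
  exact continuous_quotient_mk'

lemma tendsto_mkOr {ι : Type*} {l : Filter ι} {f : ι → Vd d} {v : Vd d} (hv : v ≠ 0) (x₀ : CP d)
    (hf : Filter.Tendsto f l (nhds v)) :
    Filter.Tendsto (fun i => mkOr (f i) x₀) l (nhds (Projectivization.mk ℂ v hv)) := by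
  have h := ((continuousAt_mkOr hv x₀).tendsto).comp hf
  rwa [mkOr_pos x₀ hv] at h

lemma eventually_ne_zero {ι : Type*} {l : Filter ι} {f : ι → Vd d} {v : Vd d} (hv : v ≠ 0)
    (hf : Filter.Tendsto f l (nhds v)) : ∀ᶠ i in l, f i ≠ 0 := by
  have hopen : IsOpen {w : Vd d | w ≠ 0} := isOpen_compl_singleton
  exact hf (hopen.mem_nhds hv)

lemma sum_normSq_ne_zero {v : Vd d} (hv : v ≠ 0) : (∑ k, Complex.normSq (v k)) ≠ 0 := by
  intro h
  apply hv
  funext i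
  have h1 : ∀ k ∈ Finset.univ, (0:ℝ) ≤ Complex.normSq (v k) := fun k _ => Complex.normSq_nonneg _
  have h2 := (Finset.sum_eq_zero_iff_of_nonneg h1).mp h i (Finset.mem_univ i)
  exact Complex.normSq_eq_zero.mp h2

/-- The auxiliary "projector matrix" of a nonzero vector. -/
noncomputable def projMatAux (v : {v : Vd d // v ≠ 0}) : Mtx d :=
  Matrix.of fun i j =>
    ((∑ k, Complex.normSq (v.1 k) : ℝ) : ℂ)⁻¹ * (v.1 i * (starRingEnd ℂ) (v.1 j))

lemma projMatAux_compat (a b : {v : Vd d // v ≠ 0}) (t : ℂ) (h : (a : Vd d) = t • (b : Vd d)) :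
    projMatAux a = projMatAux b := by
  obtain ⟨a, ha⟩ := a
  obtain ⟨b, hb⟩ := b
  simp only at h
  subst h
  have ht : t ≠ 0 := by
    rintro rfl
    simp at ha
  ext i j
  simp only [projMatAux, Matrix.of_apply, Pi.smul_apply, smul_eq_mul]
  have hsum : ∑ k, Complex.normSq (t * b k) = Complex.normSq t * ∑ k, Complex.normSq (b k) := by
    simp [Complex.normSq_mul, Finset.mul_sum]
  rw [hsum]
  have hb' : (∑ k, Complex.normSq (b k)) ≠ 0 := sum_normSq_ne_zero hb
  have ht' : Complex.normSq t ≠ 0 := fun h => ht (Complex.normSq_eq_zero.mp h)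
  rw [map_mul]
  have key : t * b i * ((starRingEnd ℂ) t * (starRingEnd ℂ) (b j)) =
      (Complex.normSq t : ℂ) * (b i * (starRingEnd ℂ) (b j)) := by
    rw [← Complex.mul_conj t]; ring
  have hcast1 : (Complex.normSq t : ℂ) ≠ 0 := by exact_mod_cast ht'
  rw [Complex.ofReal_mul, mul_inv, key]
  have hgen : (Complex.normSq t : ℂ)⁻¹ * ((∑ k, Complex.normSq (b k) : ℝ) : ℂ)⁻¹ *
      ((Complex.normSq t : ℂ) * (b i * (starRingEnd ℂ) (b j))) =
      ((Complex.normSq t : ℂ)⁻¹ * (Complex.normSq t : ℂ)) *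
      (((∑ k, Complex.normSq (b k) : ℝ) : ℂ)⁻¹ * (b i * (starRingEnd ℂ) (b j))) := by ring
  rw [hgen, inv_mul_cancel₀ hcast1, one_mul]

/-- The projector matrix map on projective space; it is injective and continuous, which
yields the Hausdorff property. -/
noncomputable def projMat (x : CP d) : Mtx d :=
  Projectivization.lift projMatAux projMatAux_compat x

lemma projMat_mk (v : Vd d) (hv : v ≠ 0) :
    projMat (Projectivization.mk ℂ v hv) = projMatAux ⟨v, hv⟩ := rfl

lemma projMat_injective : Function.Injective (projMat (d := d)) := by
  intro x y h
  induction x using Projectivization.ind with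
  | h v hv =>
  induction y using Projectivization.ind with
  | h w hw =>
  rw [projMat_mk, projMat_mk] at h
  rw [Projectivization.mk_eq_mk_iff']
  have hent : ∀ i j,
      ((∑ k, Complex.normSq (v k) : ℝ) : ℂ)⁻¹ * (v i * (starRingEnd ℂ) (v j)) =
      ((∑ k, Complex.normSq (w k) : ℝ) : ℂ)⁻¹ * (w i * (starRingEnd ℂ) (w j)) := by
    intro i j
    have := congrFun (congrFun (congrArg (Matrix.of).symm h) i) j
    simpa [projMatAux] using congrFun (congrFun h i) j
  obtain ⟨j₀, hj₀⟩ := Function.ne_iff.mp hv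
  have hvj₀ : v j₀ ≠ 0 := by simpa using hj₀
  have hSv : ((∑ k, Complex.normSq (v k) : ℝ) : ℂ) ≠ 0 := by
    exact_mod_cast sum_normSq_ne_zero hv
  have hSw : ((∑ k, Complex.normSq (w k) : ℝ) : ℂ) ≠ 0 := by
    exact_mod_cast sum_normSq_ne_zero hw
  have hLHS : ((∑ k, Complex.normSq (v k) : ℝ) : ℂ)⁻¹ * (v j₀ * (starRingEnd ℂ) (v j₀)) ≠ 0 := by
    apply mul_ne_zero (inv_ne_zero hSv)
    apply mul_ne_zero hvj₀
    simpa using hvj₀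
  have hwj₀ : w j₀ ≠ 0 := by
    intro hw0
    rw [hent j₀ j₀, hw0] at hLHS
    simp at hLHS
  set α := ((∑ k, Complex.normSq (v k) : ℝ) : ℂ)⁻¹ * (starRingEnd ℂ) (v j₀) with hα
  set β := ((∑ k, Complex.normSq (w k) : ℝ) : ℂ)⁻¹ * (starRingEnd ℂ) (w j₀) with hβ
  have hαne : α ≠ 0 := mul_ne_zero (inv_ne_zero hSv) (by simpa using hvj₀)
  have hβne : β ≠ 0 := mul_ne_zero (inv_ne_zero hSw) (by simpa using hwj₀)
  refine ⟨α⁻¹ * β, ?_⟩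
  funext i
  have hi := hent i j₀
  have hi' : α * v i = β * w i := by
    rw [hα, hβ]; ring_nf; ring_nf at hi
    calc ((∑ k, Complex.normSq (v k) : ℝ) : ℂ)⁻¹ * (starRingEnd ℂ) (v j₀) * v i
        = ((∑ k, Complex.normSq (v k) : ℝ) : ℂ)⁻¹ * (v i * (starRingEnd ℂ) (v j₀)) := by ring
      _ = ((∑ k, Complex.normSq (w k) : ℝ) : ℂ)⁻¹ * (w i * (starRingEnd ℂ) (w j₀)) := hent i j₀
      _ = ((∑ k, Complex.normSq (w k) : ℝ) : ℂ)⁻¹ * (starRingEnd ℂ) (w j₀) * w i := by ring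
  show (α⁻¹ * β) • w i = v i
  have h2 : α⁻¹ * (α * v i) = v i := by rw [← mul_assoc, inv_mul_cancel₀ hαne, one_mul]
  rw [smul_eq_mul, mul_assoc, ← hi', h2]

lemma projMat_continuous : Continuous (projMat (d := d)) := by
  have hcont : Continuous (projMatAux (d := d)) := by
    apply continuous_matrix
    intro i j
    simp only [projMatAux, Matrix.of_apply]
    have hS : Continuous fun v : {v : Vd d // v ≠ 0} =>
        ((∑ k, Complex.normSq (v.1 k) : ℝ) : ℂ) := by
      apply Complex.continuous_ofReal.comp
      apply continuous_finset_sum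
      intro k _
      exact Complex.continuous_normSq.comp ((continuous_apply k).comp continuous_subtype_val)
    have hSinv : Continuous fun v : {v : Vd d // v ≠ 0} =>
        ((∑ k, Complex.normSq (v.1 k) : ℝ) : ℂ)⁻¹ := by
      apply hS.inv₀
      intro v
      exact_mod_cast sum_normSq_ne_zero v.2
    apply hSinv.mul
    apply Continuous.mul
    · exact (continuous_apply i).comp continuous_subtype_val
    · exact Complex.continuous_conj.comp ((continuous_apply j).comp continuous_subtype_val)
  show Continuous (Quotient.lift projMatAux _)
  exact hcont.quotient_lift _

instance : T2Space (CP d) := by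
  constructor
  intro x y hxy
  obtain ⟨u, v, hu, hv, hxu, hyv, huv⟩ :=
    t2_separation (show projMat x ≠ projMat y from fun h => hxy (projMat_injective h))
  exact ⟨projMat ⁻¹' u, projMat ⁻¹' v, hu.preimage projMat_continuous,
    hv.preimage projMat_continuous, hxu, hyv, huv.preimage _⟩

lemma isCompact_sphereV : IsCompact {v : Vd d | ‖v‖ = 1} := by
  have hbox : IsCompact ((Set.univ.pi fun _ : Fin (d+1) => Metric.closedBall (0:ℂ) 1) :
      Set (Vd d)) :=
    isCompact_univ_pi fun _ => isCompact_closedBall _ _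
  apply IsCompact.of_isClosed_subset hbox
  · exact isClosed_eq continuous_norm continuous_const
  · intro v hv
    rw [Set.mem_univ_pi]
    intro i
    rw [Metric.mem_closedBall, Complex.dist_eq, sub_zero]
    calc ‖v i‖ ≤ ‖v‖ := norm_le_pi_norm v i
      _ = 1 := hv

lemma isCompact_matBox (R : ℝ) : IsCompact {M : Mtx d | ∀ i j, ‖M i j‖ ≤ R} := by
  have hbox : IsCompact ((Set.univ.pi fun _ : Fin (d+1) =>
      Set.univ.pi fun _ : Fin (d+1) => Metric.closedBall (0:ℂ) R) : Set (Mtx d)) :=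
    isCompact_univ_pi fun _ => isCompact_univ_pi fun _ => isCompact_closedBall _ _
  apply IsCompact.of_isClosed_subset hbox
  · have : {M : Mtx d | ∀ i j, ‖M i j‖ ≤ R} =
        ⋂ i, ⋂ j, {M : Mtx d | ‖M i j‖ ≤ R} := by
      ext M; simp [Set.mem_iInter]
    rw [this]
    apply isClosed_iInter
    intro i
    apply isClosed_iInter
    intro j
    apply isClosed_le _ continuous_const
    exact continuous_norm.comp ((continuous_apply j).comp (continuous_apply i))
  · intro M hM
    rw [Set.mem_univ_pi]
    intro i
    rw [Set.mem_univ_pi]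
    intro j
    rw [Metric.mem_closedBall, Complex.dist_eq, sub_zero]
    exact hM i j

lemma ultrafilter_tendsto_of_mem_compact {X : Type*} [TopologicalSpace X] {s : Set X}
    (hs : IsCompact s) (𝒰 : Ultrafilter ℕ) (f : ℕ → X) (hf : ∀ n, f n ∈ s) :
    ∃ x ∈ s, Filter.Tendsto f 𝒰 (nhds x) := by
  obtain ⟨x, hxs, hx⟩ := hs.ultrafilter_le_nhds (𝒰.map f) (by
    rw [Ultrafilter.coe_map, Filter.le_principal_iff, Filter.mem_map]
    exact Filter.univ_mem' hf)
  exact ⟨x, hxs, hx⟩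

lemma eq_limit_in_compact {s : Set (CP d)} (hs : IsCompact s) (𝒰 : Ultrafilter ℕ)
    {f : ℕ → CP d} (hf : ∀ n, f n ∈ s) {q : CP d} (hq : Filter.Tendsto f 𝒰 (nhds q)) :
    q ∈ s := by
  obtain ⟨x, hxs, hx⟩ := ultrafilter_tendsto_of_mem_compact hs 𝒰 f hf
  rwa [tendsto_nhds_unique hq hx]

lemma tendsto_mulVec {ι : Type*} {l : Filter ι} {A : ι → Mtx d} {B : Mtx d}
    {f : ι → Vd d} {v : Vd d} (hA : Filter.Tendsto A l (nhds B))
    (hf : Filter.Tendsto f l (nhds v)) :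
    Filter.Tendsto (fun i => (A i) *ᵥ (f i)) l (nhds (B *ᵥ v)) := by
  rw [tendsto_pi_nhds]
  intro j
  have hAe : ∀ i : Fin (d+1), Filter.Tendsto (fun k => A k j i) l (nhds (B j i)) := by
    intro i
    exact tendsto_pi_nhds.mp (tendsto_pi_nhds.mp hA j) i
  have hfe : ∀ i : Fin (d+1), Filter.Tendsto (fun k => f k i) l (nhds (v i)) :=
    fun i => tendsto_pi_nhds.mp hf i
  simp only [Matrix.mulVec, dotProduct]
  exact tendsto_finset_sum _ fun i _ => (hAe i).mul (hfe i)

/-- The key escape lemma: if a sequence of lifted automorphisms moves a point outside `Ω`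
into `Ω` in the limit, we get a contradiction. -/
lemma no_escape {Ω : Set (CP d)} (hΩopen : IsOpen Ω) {ι : Type*} {l : Filter ι} [l.NeBot]
    {δ : ι → SLd d} (hδ : ∀ m, (QuotientGroup.mk (δ m) : PSLd d) ∈ Aut Ω)
    {w : Vd d} (hw : w ≠ 0) {q : CP d} (hq : q ∈ Ω)
    (hnot : Projectivization.mk ℂ w hw ∉ Ω) (x₀ : CP d)
    (hlim : Filter.Tendsto (fun m => mkOr (((δ m : Mtx d)) *ᵥ w) x₀) l (nhds q)) : False := by
  have hev : ∀ᶠ m in l, mkOr (((δ m : Mtx d)) *ᵥ w) x₀ ∈ Ω := hlim (hΩopen.mem_nhds hq)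
  obtain ⟨m, hm⟩ := hev.exists
  rw [mkOr_pos x₀ (mulVec_ne_zero (δ m) hw)] at hm
  rw [← pslPerm_mk_mk (δ m) w hw] at hm
  exact act_not_mem (hδ m) hnot hm

lemma line_contra {Ω : Set (CP d)} (hproper : IsProperDomain Ω) {a b : Vd d}
    (ha : a ≠ 0) (hb : b ≠ 0) (hind : ∀ c : ℂ, c • b ≠ a)
    (hcl : ∀ (v : Vd d) (hv : v ≠ 0), v ∈ Submodule.span ℂ ({a, b} : Set (Vd d)) →
      Projectivization.mk ℂ v hv ∈ closure Ω) : False := by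
  have hli : LinearIndependent ℂ ![a, b] := by
    rw [linearIndependent_fin2]
    exact ⟨hb, hind⟩
  have hr : Set.range ![a, b] = ({a, b} : Set (Vd d)) := by
    simp only [Matrix.range_cons, Matrix.range_empty, Set.union_empty, Set.union_singleton]
    exact Set.pair_comm b a
  have hfin : Module.finrank ℂ (Submodule.span ℂ ({a, b} : Set (Vd d))) = 2 := by
    rw [← hr, finrank_span_eq_card hli]
    simp
  apply hproper (projSet (Submodule.span ℂ ({a, b} : Set (Vd d))))
    ⟨Submodule.span ℂ ({a, b} : Set (Vd d)), hfin, rfl⟩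
  intro x hx
  have hsub : x.submodule ≤ Submodule.span ℂ ({a, b} : Set (Vd d)) := hx
  rw [Projectivization.submodule_eq] at hsub
  have hrep : x.rep ∈ Submodule.span ℂ ({a, b} : Set (Vd d)) := by
    apply hsub
    exact Submodule.mem_span_singleton_self _
  have := hcl x.rep x.rep_nonzero hrep
  rwa [Projectivization.mk_rep] at this

/-- Main degeneration lemma: if elements of `Aut Ω` have rescaled lifts converging to a
singular matrix `A∞`, then no point in the projective image of `A∞` lies in `Ω`. -/
lemma limit_range_not_mem {Ω : Set (CP d)} (hΩopen : IsOpen Ω) (hproper : IsProperDomain Ω)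
    (𝒰 : Ultrafilter ℕ) {g : ℕ → SLd d}
    (hg : ∀ k, (QuotientGroup.mk (g k) : PSLd d) ∈ Aut Ω)
    {c : ℕ → ℂ} (hc : ∀ k, c k ≠ 0) {A' : Mtx d}
    (hlim : Filter.Tendsto (fun k => c k • ((g k : Mtx d))) 𝒰 (nhds A'))
    (hdet : A'.det = 0) {u : Vd d} (hu : A' *ᵥ u ≠ 0) (x₀ : CP d)
    (hmem : Projectivization.mk ℂ (A' *ᵥ u) hu ∈ Ω) : False := by
  by_cases hA1 : ∃ w : Vd d, (∃ cc : ℂ, cc ≠ 0 ∧ A' *ᵥ w = cc • (A' *ᵥ u)) ∧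
      ∀ hw : w ≠ 0, Projectivization.mk ℂ w hw ∉ Ω
  · obtain ⟨w, ⟨cc, hcc, hweq⟩, hwΩ⟩ := hA1
    have hAw : A' *ᵥ w ≠ 0 := by rw [hweq]; exact smul_ne_zero hcc hu
    have hw0 : w ≠ 0 := by
      rintro rfl
      rw [Matrix.mulVec_zero] at hAw
      exact hAw rfl
    apply no_escape (l := (𝒰 : Filter ℕ)) hΩopen hg hw0 hmem (hwΩ hw0) x₀
    have h1 : Filter.Tendsto (fun k => (c k • ((g k : Mtx d))) *ᵥ w) 𝒰 (nhds (A' *ᵥ w)) :=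
      tendsto_mulVec hlim tendsto_const_nhds
    have h2 := tendsto_mkOr hAw x₀ h1
    have h3 : (fun k => mkOr ((c k • ((g k : Mtx d))) *ᵥ w) x₀) =
        fun k => mkOr (((g k : Mtx d)) *ᵥ w) x₀ := by
      funext k
      rw [Matrix.smul_mulVec, mkOr_smul x₀ (hc k)]
    rw [h3] at h2
    have h4 : Projectivization.mk ℂ (A' *ᵥ w) hAw = Projectivization.mk ℂ (A' *ᵥ u) hu := by
      rw [Projectivization.mk_eq_mk_iff']
      exact ⟨cc, hweq.symm⟩
    rwa [h4] at h2
  · push_neg at hA1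
    obtain ⟨n₀, hn₀ne, hn₀⟩ := Matrix.exists_mulVec_eq_zero_iff.mpr hdet
    have hu0 : u ≠ 0 := fun h => hu (by rw [h, Matrix.mulVec_zero])
    apply line_contra hproper hu0 hn₀ne
    · intro cc h
      apply hu
      rw [← h, Matrix.mulVec_smul, hn₀, smul_zero]
    · intro v hv hvW
      obtain ⟨a, b, hab⟩ := Submodule.mem_span_pair.mp hvW
      by_cases hazero : a = 0
      · have hvb : v = b • n₀ := by rw [← hab, hazero, zero_smul, zero_add]
        have hbne : b ≠ 0 := by
          rintro rfl
          rw [zero_smul] at hvb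
          exact hv hvb
        have hkey : ∀ m : ℕ, mkOr (n₀ + (((1:ℝ)/(m+1) : ℝ) : ℂ) • u) x₀ ∈ Ω := by
          intro m
          have htr : ((1:ℝ)/(m+1) : ℝ) ≠ 0 := by positivity
          have ht : (((1:ℝ)/(m+1) : ℝ) : ℂ) ≠ 0 := Complex.ofReal_ne_zero.mpr htr
          have hAeq : A' *ᵥ (n₀ + (((1:ℝ)/(m+1) : ℝ) : ℂ) • u) =
              (((1:ℝ)/(m+1) : ℝ) : ℂ) • (A' *ᵥ u) := by
            rw [Matrix.mulVec_add, hn₀, Matrix.mulVec_smul, zero_add]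
          obtain ⟨hwne, hmem'⟩ := hA1 _ ⟨_, ht, hAeq⟩
          rw [mkOr_pos x₀ hwne]
          exact hmem'
        have hlim2 : Filter.Tendsto (fun m : ℕ => mkOr (n₀ + (((1:ℝ)/(m+1) : ℝ) : ℂ) • u) x₀)
            Filter.atTop (nhds (Projectivization.mk ℂ n₀ hn₀ne)) := by
          apply tendsto_mkOr hn₀ne x₀
          have hsc : Filter.Tendsto (fun m : ℕ => (((1:ℝ)/(m+1) : ℝ) : ℂ)) Filter.atTop
              (nhds 0) := by
            have h0 := tendsto_one_div_add_atTop_nhds_zero_nat (𝕜 := ℝ)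
            have h2 := (Complex.continuous_ofReal.tendsto (0:ℝ)).comp h0
            rw [Complex.ofReal_zero] at h2
            exact h2
          have := (tendsto_const_nhds (x := n₀) (f := Filter.atTop)).add (hsc.smul_const u)
          simpa using this
        have hcl2 : Projectivization.mk ℂ n₀ hn₀ne ∈ closure Ω :=
          mem_closure_of_tendsto hlim2 (Filter.Eventually.of_forall hkey)
        have heq : Projectivization.mk ℂ v hv = Projectivization.mk ℂ n₀ hn₀ne := by
          rw [Projectivization.mk_eq_mk_iff']
          exact ⟨b, hvb.symm⟩
        rwa [heq]
      · have hAv : A' *ᵥ v = a • (A' *ᵥ u) := by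
          rw [← hab, Matrix.mulVec_add, Matrix.mulVec_smul, Matrix.mulVec_smul, hn₀,
            smul_zero, add_zero]
        obtain ⟨hw, hmem'⟩ := hA1 v ⟨a, hazero, hAv⟩
        exact subset_closure hmem'

lemma norm_c_inv {r : ℝ} (hr : 0 < r) : ‖((r : ℝ) : ℂ)⁻¹‖ = r⁻¹ := by
  rw [norm_inv, Complex.norm_real, Real.norm_eq_abs, abs_of_pos hr]

lemma image_vector_identity (g : SLd d) {rr ρρ : ℝ} (hrr : rr ≠ 0) (hρρ : ρρ ≠ 0)
    (cc : ℂ) (zz u : Vd d) :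
    ((ρρ : ℝ) : ℂ)⁻¹ • ((g : Mtx d) *ᵥ (zz + (cc * (((rr)⁻¹ * ρρ : ℝ) : ℂ)) • u)) =
      ((ρρ : ℝ) : ℂ)⁻¹ • ((g : Mtx d) *ᵥ zz) +
        cc • (((rr : ℝ) : ℂ)⁻¹ • ((g : Mtx d) *ᵥ u)) := by
  rw [Matrix.mulVec_add, Matrix.mulVec_smul, smul_add, smul_smul, smul_smul]
  congr 1
  have hrrC : ((rr : ℝ) : ℂ) ≠ 0 := Complex.ofReal_ne_zero.mpr hrr
  have hρρC : ((ρρ : ℝ) : ℂ) ≠ 0 := Complex.ofReal_ne_zero.mpr hρρ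
  push_cast
  field_simp

/-- Boundedness of matrix entries of lifts of automorphisms almost returning a compact set. -/
lemma entries_bounded {Ω : Set (CP d)} (hΩopen : IsOpen Ω) (hproper : IsProperDomain Ω)
    {K : Set (CP d)} (hK : K ⊆ Ω) (hKc : IsCompact K) :
    ∃ R : ℝ, ∀ g : SLd d, (QuotientGroup.mk g : PSLd d) ∈ Aut Ω →
      (pslPerm d (QuotientGroup.mk g) '' K ∩ K).Nonempty →
      ∀ i j, ‖(g : Mtx d) i j‖ ≤ R := by
  by_contra hcon
  push_neg at hcon
  have hseq : ∀ k : ℕ, ∃ g : SLd d, ((QuotientGroup.mk g : PSLd d) ∈ Aut Ω ∧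
      (pslPerm d (QuotientGroup.mk g) '' K ∩ K).Nonempty) ∧
      ∃ i j, (k : ℝ) < ‖(g : Mtx d) i j‖ := by
    intro k
    obtain ⟨g, h1, h2, h3⟩ := hcon k
    exact ⟨g, ⟨h1, h2⟩, h3⟩
  choose g hgmem hgbig using hseq
  have hgAut : ∀ k, (QuotientGroup.mk (g k) : PSLd d) ∈ Aut Ω := fun k => (hgmem k).1
  have hne : (Finset.univ : Finset (Fin (d+1) × Fin (d+1))).Nonempty := Finset.univ_nonempty
  set r : ℕ → ℝ := fun k => Finset.univ.sup' hne (fun p : Fin (d+1) × Fin (d+1) =>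
    ‖(g k : Mtx d) p.1 p.2‖) with hrdef
  have hrge : ∀ k (i j : Fin (d+1)), ‖(g k : Mtx d) i j‖ ≤ r k := by
    intro k i j
    rw [hrdef]
    exact Finset.le_sup' (fun p : Fin (d+1) × Fin (d+1) => ‖(g k : Mtx d) p.1 p.2‖)
      (Finset.mem_univ (i, j))
  have hrbig : ∀ k : ℕ, (k : ℝ) < r k := by
    intro k
    obtain ⟨i, j, hij⟩ := hgbig k
    exact lt_of_lt_of_le hij (hrge k i j)
  have hrpos : ∀ k, 0 < r k := fun k => lt_of_le_of_lt (Nat.cast_nonneg k) (hrbig k)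
  set c : ℕ → ℂ := fun k => ((r k : ℝ) : ℂ)⁻¹ with hcdef
  have hcne : ∀ k, c k ≠ 0 := fun k =>
    inv_ne_zero (Complex.ofReal_ne_zero.mpr (hrpos k).ne')
  have hnormc : ∀ k, ‖c k‖ = (r k)⁻¹ := fun k => norm_c_inv (hrpos k)
  set A : ℕ → Mtx d := fun k => c k • ((g k : Mtx d)) with hAdef
  have hAbd : ∀ k, A k ∈ {M : Mtx d | ∀ i j, ‖M i j‖ ≤ 1} := by
    intro k i j
    show ‖(c k • ((g k : Mtx d))) i j‖ ≤ 1
    rw [Matrix.smul_apply, norm_smul, hnormc k]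
    calc (r k)⁻¹ * ‖(g k : Mtx d) i j‖ ≤ (r k)⁻¹ * r k :=
          mul_le_mul_of_nonneg_left (hrge k i j) (inv_nonneg.mpr (hrpos k).le)
      _ = 1 := inv_mul_cancel₀ (hrpos k).ne'
  set 𝒰 : Ultrafilter ℕ := Ultrafilter.of Filter.atTop with h𝒰def
  have h𝒰le : (𝒰 : Filter ℕ) ≤ Filter.atTop := Ultrafilter.of_le _
  obtain ⟨A', hA'bd, hA'lim⟩ :=
    ultrafilter_tendsto_of_mem_compact (isCompact_matBox 1) 𝒰 A hAbd
  -- the limit matrix is singular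
  have hrlim : Filter.Tendsto r Filter.atTop Filter.atTop :=
    Filter.tendsto_atTop_mono (fun k => (hrbig k).le) tendsto_natCast_atTop_atTop
  have hclim : Filter.Tendsto c Filter.atTop (nhds 0) := by
    have h1 : Filter.Tendsto (fun k => (r k)⁻¹) Filter.atTop (nhds 0) :=
      tendsto_inv_atTop_zero.comp hrlim
    have h2 := (Complex.continuous_ofReal.tendsto (0:ℝ)).comp h1
    rw [Complex.ofReal_zero] at h2
    have h3 : ∀ k, c k = (((r k)⁻¹ : ℝ) : ℂ) := by
      intro k
      rw [hcdef, Complex.ofReal_inv]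
    exact Filter.Tendsto.congr (fun k => (h3 k).symm) h2
  have hdet0 : A'.det = 0 := by
    have h1 : Filter.Tendsto (fun k => (A k).det) 𝒰 (nhds A'.det) :=
      ((continuous_id.matrix_det).tendsto A').comp hA'lim
    have h2 : ∀ k, (A k).det = (c k) ^ (d+1) := by
      intro k
      rw [hAdef]
      rw [Matrix.det_smul, Matrix.SpecialLinearGroup.det_coe, mul_one, Fintype.card_fin]
    have h3 : Filter.Tendsto (fun k => (c k) ^ (d+1)) Filter.atTop (nhds 0) := by
      have := hclim.pow (d+1)
      rwa [zero_pow (Nat.succ_ne_zero d)] at this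
    have h4 : Filter.Tendsto (fun k => (A k).det) Filter.atTop (nhds 0) :=
      Filter.Tendsto.congr (fun k => (h2 k).symm) h3
    exact tendsto_nhds_unique h1 (h4.mono_left h𝒰le)
  -- a nonzero entry of the limit
  have hargmax : ∀ k, ∃ p : Fin (d+1) × Fin (d+1), r k = ‖(g k : Mtx d) p.1 p.2‖ := by
    intro k
    obtain ⟨p, _, hp⟩ := Finset.exists_mem_eq_sup' hne
      (fun p : Fin (d+1) × Fin (d+1) => ‖(g k : Mtx d) p.1 p.2‖)
    exact ⟨p, hp⟩
  choose pk hpk using hargmax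
  obtain ⟨p', hp'⟩ := Ultrafilter.eq_pure_of_finite (𝒰.map pk)
  have hpev : ∀ᶠ k in 𝒰, pk k = p' := by
    have hmem : {p'} ∈ 𝒰.map pk := by
      rw [hp']
      exact Filter.mem_pure.mpr rfl
    have : pk ⁻¹' {p'} ∈ 𝒰 := Ultrafilter.mem_map.mp hmem
    exact this
  have hentry1 : ∀ᶠ k in 𝒰, ‖A k p'.1 p'.2‖ = 1 := by
    filter_upwards [hpev] with k hk
    have h1 : ‖A k (pk k).1 (pk k).2‖ = 1 := by
      show ‖(c k • ((g k : Mtx d))) (pk k).1 (pk k).2‖ = 1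
      rw [Matrix.smul_apply, norm_smul, hnormc k, ← hpk k, inv_mul_cancel₀ (hrpos k).ne']
    rwa [hk] at h1
  have hA'ne : A' p'.1 p'.2 ≠ 0 := by
    have hT : Filter.Tendsto (fun k => ‖A k p'.1 p'.2‖) 𝒰 (nhds ‖A' p'.1 p'.2‖) := by
      have hcont : Continuous fun M : Mtx d => ‖M p'.1 p'.2‖ :=
        continuous_norm.comp ((continuous_apply p'.2).comp (continuous_apply p'.1))
      exact (hcont.tendsto A').comp hA'lim
    have h1 : Filter.Tendsto (fun k => ‖A k p'.1 p'.2‖) 𝒰 (nhds 1) :=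
      Filter.Tendsto.congr' (hentry1.mono fun k hk => hk.symm) tendsto_const_nhds
    have h2 : ‖A' p'.1 p'.2‖ = 1 := tendsto_nhds_unique hT h1
    intro h
    rw [h, norm_zero] at h2
    exact one_ne_zero h2.symm
  set u : Vd d := Pi.single p'.2 1 with hudef
  have hAu : A' *ᵥ u ≠ 0 := by
    intro h
    apply hA'ne
    have h1 := congrFun h p'.1
    have h2 := congrFun (Matrix.mulVec_single A' p'.2 (1:ℂ)) p'.1
    rw [hudef] at h1
    rw [h1] at h2
    have h3 : (0 : ℂ) = A' p'.1 p'.2 * 1 := h2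
    rw [mul_one] at h3
    exact h3.symm
  -- witnesses in K
  have hwit : ∀ k, ∃ zz : CP d, zz ∈ K ∧ pslPerm d (QuotientGroup.mk (g k)) zz ∈ K := by
    intro k
    obtain ⟨y, ⟨zz, hz, rfl⟩, hy2⟩ := (hgmem k).2
    exact ⟨zz, hz, hy2⟩
  choose z hzK hzK' using hwit
  set x₀ : CP d := z 0 with hx₀def
  set zl : ℕ → Vd d := fun k => ((‖(z k).rep‖ : ℝ) : ℂ)⁻¹ • (z k).rep with hzldef
  have hrepn : ∀ k, (z k).rep ≠ 0 := fun k => Projectivization.rep_nonzero (z k)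
  have hnormrep : ∀ k, (0:ℝ) < ‖(z k).rep‖ := fun k => norm_pos_iff.mpr (hrepn k)
  have hzlne : ∀ k, zl k ≠ 0 := fun k =>
    smul_ne_zero (inv_ne_zero (Complex.ofReal_ne_zero.mpr (hnormrep k).ne')) (hrepn k)
  have hzlnorm : ∀ k, zl k ∈ {v : Vd d | ‖v‖ = 1} := by
    intro k
    show ‖zl k‖ = 1
    rw [hzldef]
    simp only
    rw [norm_smul, norm_c_inv (hnormrep k), inv_mul_cancel₀ (hnormrep k).ne']
  have hzlmk : ∀ k, mkOr (zl k) x₀ = z k := by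
    intro k
    rw [mkOr_pos x₀ (hzlne k)]
    have : Projectivization.mk ℂ (zl k) (hzlne k) =
        Projectivization.mk ℂ ((z k).rep) (hrepn k) := by
      rw [Projectivization.mk_eq_mk_iff']
      exact ⟨((‖(z k).rep‖ : ℝ) : ℂ)⁻¹, rfl⟩
    rw [this, Projectivization.mk_rep]
  obtain ⟨v', hv's, hv'lim⟩ :=
    ultrafilter_tendsto_of_mem_compact isCompact_sphereV 𝒰 zl hzlnorm
  have hv'ne : v' ≠ 0 := by
    intro h
    rw [Set.mem_setOf_eq, h, norm_zero] at hv's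
    exact one_ne_zero hv's.symm
  have hxK : Projectivization.mk ℂ v' hv'ne ∈ K := by
    apply eq_limit_in_compact hKc 𝒰 hzK
    have h1 := tendsto_mkOr hv'ne x₀ hv'lim
    exact Filter.Tendsto.congr (fun k => hzlmk k) h1
  -- relate images and the action
  have hact : ∀ k, mkOr ((A k) *ᵥ zl k) x₀ = pslPerm d (QuotientGroup.mk (g k)) (z k) := by
    intro k
    rw [hAdef]
    simp only
    rw [Matrix.smul_mulVec, mkOr_smul x₀ (hcne k),
      mkOr_pos x₀ (mulVec_ne_zero (g k) (hzlne k)), ← pslPerm_mk_mk]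
    congr 1
    rw [← hzlmk k, mkOr_pos x₀ (hzlne k)]
  by_cases hTv : A' *ᵥ v' = 0
  · -- `A' *ᵥ v' = 0` : second rescaling of the image vectors
    set ρ : ℕ → ℝ := fun k => ‖(g k : Mtx d) *ᵥ zl k‖ with hρdef
    have hρpos : ∀ k, 0 < ρ k := by
      intro k
      simp only [hρdef]
      exact norm_pos_iff.mpr (mulVec_ne_zero (g k) (hzlne k))
    have hρne : ∀ k, ((ρ k : ℝ) : ℂ) ≠ 0 := fun k => Complex.ofReal_ne_zero.mpr (hρpos k).ne'
    set yl : ℕ → Vd d := fun k => ((ρ k : ℝ) : ℂ)⁻¹ • ((g k : Mtx d) *ᵥ zl k) with hyldef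
    have hylnorm : ∀ k, yl k ∈ {v : Vd d | ‖v‖ = 1} := by
      intro k
      show ‖yl k‖ = 1
      simp only [hyldef]
      rw [norm_smul, norm_c_inv (hρpos k)]
      have : ‖(g k : Mtx d) *ᵥ zl k‖ = ρ k := by simp only [hρdef]
      rw [this, inv_mul_cancel₀ (hρpos k).ne']
    have hylmk : ∀ k, mkOr (yl k) x₀ = pslPerm d (QuotientGroup.mk (g k)) (z k) := by
      intro k
      simp only [hyldef]
      rw [mkOr_smul x₀ (inv_ne_zero (hρne k)),
        mkOr_pos x₀ (mulVec_ne_zero (g k) (hzlne k)), ← pslPerm_mk_mk]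
      congr 1
      rw [← hzlmk k, mkOr_pos x₀ (hzlne k)]
    obtain ⟨w₀, hw₀s, hw₀lim⟩ :=
      ultrafilter_tendsto_of_mem_compact isCompact_sphereV 𝒰 yl hylnorm
    have hw₀ne : w₀ ≠ 0 := by
      intro h
      rw [Set.mem_setOf_eq, h, norm_zero] at hw₀s
      exact one_ne_zero hw₀s.symm
    have hyK : Projectivization.mk ℂ w₀ hw₀ne ∈ K := by
      apply eq_limit_in_compact hKc 𝒰 hzK'
      have h1 := tendsto_mkOr hw₀ne x₀ hw₀lim
      exact Filter.Tendsto.congr (fun k => hylmk k) h1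
    have hyΩ : Projectivization.mk ℂ w₀ hw₀ne ∈ Ω := hK hyK
    by_cases hpar : ∃ cc : ℂ, w₀ = cc • (A' *ᵥ u)
    · obtain ⟨cc, hcc⟩ := hpar
      apply limit_range_not_mem hΩopen hproper 𝒰 hgAut hcne hA'lim hdet0 hAu x₀
      have heq : Projectivization.mk ℂ w₀ hw₀ne = Projectivization.mk ℂ (A' *ᵥ u) hAu := by
        rw [Projectivization.mk_eq_mk_iff']
        exact ⟨cc, hcc.symm⟩
      rwa [heq] at hyΩ
    · push_neg at hpar
      have hs0 : Filter.Tendsto (fun k => ‖(A k) *ᵥ zl k‖) 𝒰 (nhds 0) := by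
        have h1 : Filter.Tendsto (fun k => (A k) *ᵥ zl k) 𝒰 (nhds (A' *ᵥ v')) :=
          tendsto_mulVec hA'lim hv'lim
        rw [hTv] at h1
        have h2 := (continuous_norm.tendsto (0 : Vd d)).comp h1
        rwa [norm_zero] at h2
      have hsC : Filter.Tendsto (fun k => ((‖(A k) *ᵥ zl k‖ : ℝ) : ℂ)) 𝒰 (nhds 0) := by
        have h2 := (Complex.continuous_ofReal.tendsto (0:ℝ)).comp hs0
        rwa [Complex.ofReal_zero] at h2
      have hsval : ∀ k, ‖(A k) *ᵥ zl k‖ = (r k)⁻¹ * ρ k := by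
        intro k
        simp only [hAdef]
        rw [Matrix.smul_mulVec, norm_smul, hnormc k]
      have hclaim : ∀ cc : ℂ, mkOr (w₀ + cc • (A' *ᵥ u)) x₀ ∈ closure Ω := by
        intro cc
        have hne0 : w₀ + cc • (A' *ᵥ u) ≠ 0 := by
          intro h
          apply hpar (-cc)
          rw [neg_smul]
          exact eq_neg_of_add_eq_zero_left h
        set W : ℕ → Vd d := fun k => zl k + (cc * ((((r k)⁻¹ * ρ k : ℝ)) : ℂ)) • u with hWdef
        have hWlim : Filter.Tendsto W 𝒰 (nhds v') := by
          have h0 : Filter.Tendsto (fun k => ((((r k)⁻¹ * ρ k : ℝ)) : ℂ)) 𝒰 (nhds 0) := by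
            have := hsC.congr (fun k => by rw [hsval k])
            exact this
          have h1 : Filter.Tendsto (fun k => (cc * ((((r k)⁻¹ * ρ k : ℝ)) : ℂ))) 𝒰 (nhds 0) := by
            have h2 := h0.const_mul cc
            rwa [mul_zero] at h2
          have h2 := hv'lim.add (h1.smul_const u)
          rw [zero_smul, add_zero] at h2
          exact h2
        have hWev : ∀ᶠ k in 𝒰, mkOr (W k) x₀ ∈ Ω := by
          have h1 := tendsto_mkOr hv'ne x₀ hWlim
          exact h1 (hΩopen.mem_nhds (hK hxK))
        have hWne : ∀ᶠ k in 𝒰, W k ≠ 0 := eventually_ne_zero hv'ne hWlim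
        have himg : ∀ k, W k ≠ 0 → mkOr (yl k + cc • ((A k) *ᵥ u)) x₀ =
            pslPerm d (QuotientGroup.mk (g k)) (mkOr (W k) x₀) := by
          intro k hWk
          have e_yl : yl k = ((ρ k : ℝ) : ℂ)⁻¹ • ((g k : Mtx d) *ᵥ zl k) := by
            simp only [hyldef]
          have e_A : (A k) *ᵥ u = ((r k : ℝ) : ℂ)⁻¹ • ((g k : Mtx d) *ᵥ u) := by
            simp only [hAdef, hcdef]
            rw [Matrix.smul_mulVec]
          have e_W : W k = zl k + (cc * (((r k)⁻¹ * ρ k : ℝ) : ℂ)) • u := by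
            simp only [hWdef]
          have hiden : ((ρ k : ℝ) : ℂ)⁻¹ • ((g k : Mtx d) *ᵥ W k) =
              yl k + cc • ((A k) *ᵥ u) := by
            rw [e_yl, e_A, e_W]
            exact image_vector_identity (g k) (hrpos k).ne' (hρpos k).ne' cc (zl k) u
          rw [← hiden, mkOr_smul x₀ (inv_ne_zero (hρne k)),
            mkOr_pos x₀ (mulVec_ne_zero (g k) hWk), ← pslPerm_mk_mk]
          congr 1
          rw [mkOr_pos x₀ hWk]
        have himglim : Filter.Tendsto (fun k => mkOr (yl k + cc • ((A k) *ᵥ u)) x₀) 𝒰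
            (nhds (Projectivization.mk ℂ (w₀ + cc • (A' *ᵥ u)) hne0)) := by
          apply tendsto_mkOr hne0 x₀
          exact hw₀lim.add ((tendsto_mulVec hA'lim tendsto_const_nhds).const_smul cc)
        have hevΩ : ∀ᶠ k in 𝒰, mkOr (yl k + cc • ((A k) *ᵥ u)) x₀ ∈ Ω := by
          filter_upwards [hWev, hWne] with k h1 h2
          rw [himg k h2]
          exact act_mem (hgAut k) h1
        have h6 := mem_closure_of_tendsto himglim hevΩ
        rwa [mkOr_pos x₀ hne0]
      have hXcl : Projectivization.mk ℂ (A' *ᵥ u) hAu ∈ closure Ω := by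
        have hterm : ∀ m : ℕ, mkOr ((((1:ℝ)/(m+1) : ℝ) : ℂ) • w₀ + (A' *ᵥ u)) x₀ ∈ closure Ω := by
          intro m
          have htr : ((1:ℝ)/(m+1) : ℝ) ≠ 0 := by positivity
          have ht : ((((1:ℝ)/(m+1) : ℝ)) : ℂ) ≠ 0 := Complex.ofReal_ne_zero.mpr htr
          have heq2 : ((((1:ℝ)/(m+1) : ℝ)) : ℂ) • (w₀ + ((((1:ℝ)/(m+1) : ℝ)) : ℂ)⁻¹ • (A' *ᵥ u))
              = (((1:ℝ)/(m+1) : ℝ) : ℂ) • w₀ + (A' *ᵥ u) := by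
            rw [smul_add, smul_smul, mul_inv_cancel₀ ht, one_smul]
          rw [← heq2, mkOr_smul x₀ ht]
          exact hclaim _
        have hlim3 : Filter.Tendsto
            (fun m : ℕ => mkOr ((((1:ℝ)/(m+1) : ℝ) : ℂ) • w₀ + (A' *ᵥ u)) x₀) Filter.atTop
            (nhds (Projectivization.mk ℂ (A' *ᵥ u) hAu)) := by
          apply tendsto_mkOr hAu x₀
          have hsc : Filter.Tendsto (fun m : ℕ => (((1:ℝ)/(m+1) : ℝ) : ℂ)) Filter.atTop
              (nhds 0) := by
            have h0 := tendsto_one_div_add_atTop_nhds_zero_nat (𝕜 := ℝ)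
            have h2 := (Complex.continuous_ofReal.tendsto (0:ℝ)).comp h0
            rwa [Complex.ofReal_zero] at h2
          have h3 := (hsc.smul_const w₀).add (tendsto_const_nhds (x := A' *ᵥ u))
          rwa [zero_smul, zero_add] at h3
        have h4 := mem_closure_of_tendsto hlim3 (Filter.Eventually.of_forall hterm)
        rwa [closure_closure] at h4
      -- the projective line through `w₀` and `A' *ᵥ u` lies in the closure of `Ω`
      apply line_contra hproper hw₀ne hAu (fun cc h => (hpar cc) h.symm)
      intro v hv hvW
      obtain ⟨a, b, hab⟩ := Submodule.mem_span_pair.mp hvW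
      by_cases hazero : a = 0
      · have hvb : v = b • (A' *ᵥ u) := by rw [← hab, hazero, zero_smul, zero_add]
        have hbne : b ≠ 0 := by
          rintro rfl
          rw [zero_smul] at hvb
          exact hv hvb
        have heq : Projectivization.mk ℂ v hv = Projectivization.mk ℂ (A' *ᵥ u) hAu := by
          rw [Projectivization.mk_eq_mk_iff']
          exact ⟨b, hvb.symm⟩
        rwa [heq]
      · have hne5 : w₀ + (a⁻¹ * b) • (A' *ᵥ u) ≠ 0 := by
          intro h
          apply hpar (-(a⁻¹ * b))
          rw [neg_smul]
          exact eq_neg_of_add_eq_zero_left h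
        have hvps : v = a • (w₀ + (a⁻¹ * b) • (A' *ᵥ u)) := by
          rw [smul_add, smul_smul, ← mul_assoc, mul_inv_cancel₀ hazero, one_mul, ← hab]
        have h5 := hclaim (a⁻¹ * b)
        rw [mkOr_pos x₀ hne5] at h5
        have heq : Projectivization.mk ℂ v hv =
            Projectivization.mk ℂ (w₀ + (a⁻¹ * b) • (A' *ᵥ u)) hne5 := by
          rw [Projectivization.mk_eq_mk_iff']
          exact ⟨a, hvps.symm⟩
        rwa [heq]
  · -- A' *ᵥ v' ≠ 0 : the image point of v' is a point of K inside the degenerate range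
    apply limit_range_not_mem hΩopen hproper 𝒰 hgAut hcne hA'lim hdet0 (u := v') hTv x₀
    apply hK
    apply eq_limit_in_compact hKc 𝒰 hzK'
    have h1 : Filter.Tendsto (fun k => (A k) *ᵥ zl k) 𝒰 (nhds (A' *ᵥ v')) :=
      tendsto_mulVec hA'lim hv'lim
    have h2 := tendsto_mkOr hTv x₀ h1
    exact Filter.Tendsto.congr (fun k => hact k) h2

/-- The set of lifted "returning" automorphisms is closed in matrix space. -/
lemma image_closed {Ω : Set (CP d)} (hΩopen : IsOpen Ω) {K : Set (CP d)} (hKc : IsCompact K) :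
    IsClosed ((fun g : SLd d => (g : Mtx d)) ''
      {g : SLd d | (QuotientGroup.mk g : PSLd d) ∈ Aut Ω ∧
        (pslPerm d (QuotientGroup.mk g) '' K ∩ K).Nonempty}) := by
  haveI : SequentialSpace (Mtx d) :=
    inferInstanceAs (SequentialSpace (Fin (d+1) → Fin (d+1) → ℂ))
  apply IsSeqClosed.isClosed
  intro F B hmem hlim
  choose γ hγS hγeq using hmem
  have hγAut : ∀ n, (QuotientGroup.mk (γ n) : PSLd d) ∈ Aut Ω := fun n => (hγS n).1
  have hγinvAut : ∀ n, (QuotientGroup.mk ((γ n)⁻¹) : PSLd d) ∈ Aut Ω := by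
    intro n
    have h1 : (QuotientGroup.mk ((γ n)⁻¹) : PSLd d) = (QuotientGroup.mk (γ n) : PSLd d)⁻¹ := rfl
    rw [h1]
    exact inv_mem (hγAut n)
  have hlimγ : Filter.Tendsto (fun n => ((γ n : Mtx d))) Filter.atTop (nhds B) :=
    Filter.Tendsto.congr (fun n => (hγeq n).symm) hlim
  have hdetB : B.det = 1 := by
    have h1 : Filter.Tendsto (fun n => (F n).det) Filter.atTop (nhds B.det) :=
      ((continuous_id.matrix_det).tendsto B).comp hlim
    have h2 : ∀ n, (F n).det = 1 := by
      intro n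
      rw [← hγeq n]
      exact Matrix.SpecialLinearGroup.det_coe (γ n)
    have h3 : Filter.Tendsto (fun n => (F n).det) Filter.atTop (nhds 1) :=
      Filter.Tendsto.congr (fun n => (h2 n).symm) tendsto_const_nhds
    exact tendsto_nhds_unique h1 h3
  have hadj : Filter.Tendsto (fun n => (((γ n)⁻¹ : SLd d) : Mtx d)) Filter.atTop (nhds B.adjugate) := by
    have h1 : Filter.Tendsto (fun n => (F n).adjugate) Filter.atTop (nhds B.adjugate) :=
      ((continuous_id.matrix_adjugate).tendsto B).comp hlim
    apply Filter.Tendsto.congr _ h1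
    intro n
    rw [← hγeq n, Matrix.SpecialLinearGroup.coe_inv]
  set gB : SLd d := ⟨B, hdetB⟩ with hgBdef
  have hcoegB : (gB : Mtx d) = B := rfl
  have hcoegBinv : ((gB⁻¹ : SLd d) : Mtx d) = B.adjugate := Matrix.SpecialLinearGroup.coe_inv gB
  -- forward invariance
  have hfwd : ∀ z ∈ Ω, pslPerm d (QuotientGroup.mk gB) z ∈ Ω := by
    intro z hz
    by_contra hnot
    have hzv : z.rep ≠ 0 := Projectivization.rep_nonzero z
    have hwne : B *ᵥ z.rep ≠ 0 := by
      have := mulVec_ne_zero gB hzv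
      rwa [hcoegB] at this
    have hnotw : Projectivization.mk ℂ (B *ᵥ z.rep) hwne ∉ Ω := by
      intro hmem2
      apply hnot
      have h2 : pslPerm d (QuotientGroup.mk gB) z =
          Projectivization.mk ℂ (B *ᵥ z.rep) hwne := by
        conv_lhs => rw [← Projectivization.mk_rep z]
        rw [pslPerm_mk_mk gB z.rep hzv]
      rw [h2]
      exact hmem2
    apply no_escape (l := (Filter.atTop : Filter ℕ)) hΩopen hγinvAut hwne hz hnotw z
    have hvec : Filter.Tendsto (fun n => (((γ n)⁻¹ : SLd d) : Mtx d) *ᵥ (B *ᵥ z.rep)) Filter.atTop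
        (nhds z.rep) := by
      have h1 := tendsto_mulVec hadj (tendsto_const_nhds (x := B *ᵥ z.rep))
      have h2 : B.adjugate *ᵥ (B *ᵥ z.rep) = z.rep := by
        rw [Matrix.mulVec_mulVec, Matrix.adjugate_mul, hdetB, one_smul, Matrix.one_mulVec]
      rwa [h2] at h1
    have h3 := tendsto_mkOr hzv z hvec
    rwa [Projectivization.mk_rep] at h3
  -- backward invariance
  have hbwd : ∀ z ∈ Ω, pslPerm d (QuotientGroup.mk (gB⁻¹)) z ∈ Ω := by
    intro z hz
    by_contra hnot
    have hzv : z.rep ≠ 0 := Projectivization.rep_nonzero z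
    have hwne : B.adjugate *ᵥ z.rep ≠ 0 := by
      have := mulVec_ne_zero (gB⁻¹) hzv
      rwa [hcoegBinv] at this
    have hnotw : Projectivization.mk ℂ (B.adjugate *ᵥ z.rep) hwne ∉ Ω := by
      intro hmem2
      apply hnot
      have h2 : pslPerm d (QuotientGroup.mk (gB⁻¹)) z =
          Projectivization.mk ℂ (B.adjugate *ᵥ z.rep) hwne := by
        conv_lhs => rw [← Projectivization.mk_rep z]
        rw [pslPerm_mk_mk (gB⁻¹) z.rep hzv]
        exact mk_eq_mk_of_eq _ hwne (by rw [hcoegBinv])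
      rw [h2]
      exact hmem2
    apply no_escape (l := (Filter.atTop : Filter ℕ)) hΩopen hγAut hwne hz hnotw z
    have hvec : Filter.Tendsto (fun n => ((γ n) : Mtx d) *ᵥ (B.adjugate *ᵥ z.rep)) Filter.atTop
        (nhds z.rep) := by
      have h1 := tendsto_mulVec hlimγ (tendsto_const_nhds (x := B.adjugate *ᵥ z.rep))
      have h2 : B *ᵥ (B.adjugate *ᵥ z.rep) = z.rep := by
        rw [Matrix.mulVec_mulVec, Matrix.mul_adjugate, hdetB, one_smul, Matrix.one_mulVec]
      rwa [h2] at h1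
    have h3 := tendsto_mkOr hzv z hvec
    rwa [Projectivization.mk_rep] at h3
  have hAutB : (QuotientGroup.mk gB : PSLd d) ∈ Aut Ω := by
    show pslPerm d (QuotientGroup.mk gB) '' Ω = Ω
    apply Set.Subset.antisymm
    · rintro _ ⟨z, hz, rfl⟩
      exact hfwd z hz
    · intro z hz
      refine ⟨pslPerm d (QuotientGroup.mk (gB⁻¹)) z, hbwd z hz, ?_⟩
      have h1 : (QuotientGroup.mk (gB⁻¹) : PSLd d) = (QuotientGroup.mk gB : PSLd d)⁻¹ := rfl
      rw [h1, map_inv]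
      exact (pslPerm d (QuotientGroup.mk gB)).apply_symm_apply _
  -- the returning condition passes to the limit
  have hwit : ∀ n, ∃ zz : CP d, zz ∈ K ∧ pslPerm d (QuotientGroup.mk (γ n)) zz ∈ K := by
    intro n
    obtain ⟨y, ⟨zz, hzz, rfl⟩, hy2⟩ := (hγS n).2
    exact ⟨zz, hzz, hy2⟩
  choose z hzK hzK' using hwit
  set x₀ : CP d := z 0 with hx₀def
  set 𝒰 : Ultrafilter ℕ := Ultrafilter.of Filter.atTop with h𝒰def
  have h𝒰le : (𝒰 : Filter ℕ) ≤ Filter.atTop := Ultrafilter.of_le _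
  set zl : ℕ → Vd d := fun k => ((‖(z k).rep‖ : ℝ) : ℂ)⁻¹ • (z k).rep with hzldef
  have hrepn : ∀ k, (z k).rep ≠ 0 := fun k => Projectivization.rep_nonzero (z k)
  have hnormrep : ∀ k, (0:ℝ) < ‖(z k).rep‖ := fun k => norm_pos_iff.mpr (hrepn k)
  have hzlne : ∀ k, zl k ≠ 0 := by
    intro k
    simp only [hzldef]
    exact smul_ne_zero (inv_ne_zero (Complex.ofReal_ne_zero.mpr (hnormrep k).ne')) (hrepn k)
  have hzlnorm : ∀ k, zl k ∈ {v : Vd d | ‖v‖ = 1} := by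
    intro k
    show ‖zl k‖ = 1
    simp only [hzldef]
    rw [norm_smul, norm_c_inv (hnormrep k), inv_mul_cancel₀ (hnormrep k).ne']
  have hzlmk : ∀ k, mkOr (zl k) x₀ = z k := by
    intro k
    rw [mkOr_pos x₀ (hzlne k)]
    have h1 : Projectivization.mk ℂ (zl k) (hzlne k) =
        Projectivization.mk ℂ ((z k).rep) (hrepn k) := by
      rw [Projectivization.mk_eq_mk_iff']
      exact ⟨((‖(z k).rep‖ : ℝ) : ℂ)⁻¹, by simp only [hzldef]⟩
    rw [h1, Projectivization.mk_rep]
  obtain ⟨v', hv's, hv'lim⟩ :=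
    ultrafilter_tendsto_of_mem_compact isCompact_sphereV 𝒰 zl hzlnorm
  have hv'ne : v' ≠ 0 := by
    intro h
    rw [Set.mem_setOf_eq, h, norm_zero] at hv's
    exact one_ne_zero hv's.symm
  have hxK : Projectivization.mk ℂ v' hv'ne ∈ K := by
    apply eq_limit_in_compact hKc 𝒰 hzK
    have h1 := tendsto_mkOr hv'ne x₀ hv'lim
    exact Filter.Tendsto.congr (fun k => hzlmk k) h1
  have hBv' : B *ᵥ v' ≠ 0 := by
    have := mulVec_ne_zero gB hv'ne
    rwa [hcoegB] at this
  have hwK : Projectivization.mk ℂ (B *ᵥ v') hBv' ∈ K := by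
    apply eq_limit_in_compact hKc 𝒰 hzK'
    have h1 : Filter.Tendsto (fun k => ((γ k : Mtx d)) *ᵥ zl k) 𝒰 (nhds (B *ᵥ v')) :=
      tendsto_mulVec (hlimγ.mono_left h𝒰le) hv'lim
    have h2 := tendsto_mkOr hBv' x₀ h1
    apply Filter.Tendsto.congr _ h2
    intro k
    rw [mkOr_pos x₀ (mulVec_ne_zero (γ k) (hzlne k)), ← pslPerm_mk_mk]
    congr 1
    rw [← hzlmk k, mkOr_pos x₀ (hzlne k)]
  refine ⟨gB, ⟨hAutB, ?_⟩, rfl⟩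
  refine ⟨Projectivization.mk ℂ (B *ᵥ v') hBv', ⟨Projectivization.mk ℂ v' hv'ne, hxK, ?_⟩, hwK⟩
  rw [pslPerm_mk_mk gB v' hv'ne]

end Statement8Aux

/-- The automorphism group of a proper linearly convex open set acts
properly on it. -/
theorem statement_8 {d : ℕ} (Ω : Set (CP d)) (hΩopen : IsOpen Ω)
    (hlc : LinearlyConvex Ω) (hproper : IsProperDomain Ω) :
    ∀ K : Set (CP d), K ⊆ Ω → IsCompact K →
      IsCompact {φ : PSLd d | φ ∈ Aut Ω ∧ (pslPerm d φ '' K ∩ K).Nonempty} := by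
  intro K hKsub hKc
  obtain ⟨R, hR⟩ := entries_bounded hΩopen hproper hKsub hKc
  have hsurj : Function.Surjective (QuotientGroup.mk : SLd d → PSLd d) := by
    intro φ
    obtain ⟨g, hg⟩ := QuotientGroup.mk'_surjective (Subgroup.center (SLd d)) φ
    exact ⟨g, hg⟩
  have hcont : Continuous (QuotientGroup.mk : SLd d → PSLd d) := continuous_quot_mk
  set S : Set (PSLd d) :=
    {φ : PSLd d | φ ∈ Aut Ω ∧ (pslPerm d φ '' K ∩ K).Nonempty} with hSdef
  set C : Set (SLd d) := (QuotientGroup.mk : SLd d → PSLd d) ⁻¹' S with hCdef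
  have hCeq : C = {g : SLd d | (QuotientGroup.mk g : PSLd d) ∈ Aut Ω ∧
      (pslPerm d (QuotientGroup.mk g) '' K ∩ K).Nonempty} := rfl
  have hCcomp : IsCompact C := by
    have hemb : Topology.IsEmbedding (fun g : SLd d => (g : Mtx d)) :=
      ⟨⟨rfl⟩, fun a b h => Subtype.ext h⟩
    rw [hemb.isCompact_iff]
    apply IsCompact.of_isClosed_subset (isCompact_matBox R)
    · rw [hCeq]
      exact image_closed hΩopen hKc
    · rintro _ ⟨g, hg, rfl⟩
      rw [hCeq] at hg
      intro i j
      exact hR g hg.1 hg.2 i j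
  have himg : S = QuotientGroup.mk '' C := (Set.image_preimage_eq S hsurj).symm
  show IsCompact S
  rw [himg]
  exact hCcomp.image hcont


end ComplexConvex
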